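/- arXiv:2006.11443 — 5 statements merged into one kernel-verified Lean document; each statement's English description precedes it below -/
import Mathlib

section
/- Let σ² > 0, v ≥ 0 and F ∈ ℂ, let C = [[v + σ², v·conj(F)], [v·F, v·|F|² + σ²]], let μ₁ = v·(1+|F|²) + σ², e₁ = (1/√(1+|F|²))·(1, F) and e₂ = (1/√(1+|F|²))·(−conj(F), 1). Then C = μ₁·e₁e₁^H + σ²·e₂e₂^H, C is invertible, and C⁻¹ = μ₁⁻¹·e₁e₁^H + σ⁻²·e₂e₂^H, where e·e^H denotes the 2×2 rank-one matrix with (i,j) entry eᵢ·conj(eⱼ). -/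
open Complex Matrix

set_option maxHeartbeats 1600000 in
/-- With C, μ₁, e₁, e₂ as in the single-packet covariance model,
C = μ₁·e₁e₁ᴴ + σ²·e₂e₂ᴴ, C is invertible, and C⁻¹ = μ₁⁻¹·e₁e₁ᴴ + σ⁻²·e₂e₂ᴴ,
where e·eᴴ is the rank-one matrix with (i,j) entry eᵢ·conj(eⱼ). -/
theorem stmt1 (σ2 v : ℝ) (hσ : 0 < σ2) (hv : 0 ≤ v) (F : ℂ)
    (C : Matrix (Fin 2) (Fin 2) ℂ)
    (hC : C = !![(v : ℂ) + σ2, (v : ℂ) * (starRingEnd ℂ) F;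
                 (v : ℂ) * F, (v : ℂ) * (‖F‖ : ℂ) ^ 2 + σ2])
    (μ₁ : ℝ) (hμ₁ : μ₁ = v * (1 + ‖F‖ ^ 2) + σ2)
    (e₁ e₂ : Fin 2 → ℂ)
    (he₁ : e₁ = ((Real.sqrt (1 + ‖F‖ ^ 2) : ℂ))⁻¹ • ![1, F])
    (he₂ : e₂ = ((Real.sqrt (1 + ‖F‖ ^ 2) : ℂ))⁻¹ • ![-(starRingEnd ℂ) F, 1]) :
    C = ((μ₁ : ℝ) : ℂ) • Matrix.vecMulVec e₁ (star e₁)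
        + ((σ2 : ℝ) : ℂ) • Matrix.vecMulVec e₂ (star e₂) ∧
    IsUnit C ∧
    C⁻¹ = ((μ₁⁻¹ : ℝ) : ℂ) • Matrix.vecMulVec e₁ (star e₁)
        + ((σ2⁻¹ : ℝ) : ℂ) • Matrix.vecMulVec e₂ (star e₂) := by
  have hs : (0:ℝ) < 1 + ‖F‖ ^ 2 := by positivity
  have habs : ((‖F‖ : ℝ) : ℂ) ^ 2 = F * (starRingEnd ℂ) F := by
    rw [← Complex.ofReal_pow, Complex.sq_norm, Complex.mul_conj]
  have hsq : ((Real.sqrt (1 + ‖F‖ ^ 2) : ℝ) : ℂ) *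
      ((Real.sqrt (1 + ‖F‖ ^ 2) : ℝ) : ℂ) = 1 + ((‖F‖ : ℝ) : ℂ) ^ 2 := by
    rw [← Complex.ofReal_mul, Real.mul_self_sqrt hs.le]
    push_cast; ring
  have hsne : ((Real.sqrt (1 + ‖F‖ ^ 2) : ℝ) : ℂ) ≠ 0 := by
    simpa using (Real.sqrt_pos.mpr hs).ne'
  have hμpos : (0:ℝ) < μ₁ := by rw [hμ₁]; positivity
  have hμne : ((μ₁ : ℝ) : ℂ) ≠ 0 := by exact_mod_cast hμpos.ne'
  have hσne : ((σ2 : ℝ) : ℂ) ≠ 0 := by exact_mod_cast hσ.ne'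
  have hμc : ((μ₁ : ℝ) : ℂ) = (v : ℂ) * (1 + ((‖F‖ : ℝ) : ℂ) ^ 2) + (σ2 : ℂ) := by
    rw [hμ₁]; push_cast; ring
  have hCD : C * (((μ₁⁻¹ : ℝ) : ℂ) • Matrix.vecMulVec e₁ (star e₁)
        + ((σ2⁻¹ : ℝ) : ℂ) • Matrix.vecMulVec e₂ (star e₂)) = 1 := by
    subst hC he₁ he₂
    ext i j
    fin_cases i <;> fin_cases j <;>
      simp only [Matrix.mul_apply, Fin.sum_univ_two, vecMulVec_apply, Matrix.add_apply,
        Matrix.smul_apply, Matrix.cons_val', Matrix.cons_val_zero, Matrix.cons_val_one,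
        Matrix.head_cons, Matrix.head_fin_const, Matrix.empty_val', Matrix.cons_val_fin_one,
        Pi.smul_apply, Pi.star_apply, smul_eq_mul, _root_.map_mul, map_inv₀, Complex.conj_ofReal,
        _root_.map_neg, _root_.map_one, Complex.ofReal_inv, RingHom.id_apply, starRingEnd_self_apply,
        Matrix.one_apply_eq, Matrix.one_apply_ne, Fin.mk_zero, Fin.mk_one, ne_eq,
        Fin.zero_eq_one_iff, Fin.one_eq_zero_iff, Nat.succ_ne_self, not_false_eq_true,
        Matrix.one_apply, Matrix.of_apply, Complex.star_def] <;>
      field_simp <;>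
      rw [show ((Real.sqrt (1 + ‖F‖ ^ 2) : ℝ) : ℂ) ^ 2 = _ from (sq _).trans hsq, hμc, habs] <;> ring
  refine ⟨?_, ⟨⟨C, _, hCD, mul_eq_one_comm.mp hCD⟩, rfl⟩, Matrix.inv_eq_right_inv hCD⟩
  subst hC hμ₁ he₁ he₂
  ext i j
  fin_cases i <;> fin_cases j <;>
    simp only [vecMulVec_apply, Matrix.add_apply,
        Matrix.smul_apply, Matrix.cons_val', Matrix.cons_val_zero, Matrix.cons_val_one,
        Matrix.head_cons, Matrix.head_fin_const, Matrix.empty_val', Matrix.cons_val_fin_one,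
        Pi.smul_apply, Pi.star_apply, smul_eq_mul, _root_.map_mul, map_inv₀, Complex.conj_ofReal,
        _root_.map_neg, _root_.map_one, Complex.ofReal_inv, starRingEnd_self_apply,
        Matrix.of_apply, Complex.star_def, Complex.ofReal_add, Complex.ofReal_mul, Complex.ofReal_pow,
        Fin.zero_eta, Fin.mk_one, Fin.mk_zero, Complex.ofReal_one] <;>
    field_simp <;> rw [show ((Real.sqrt (1 + ‖F‖ ^ 2) : ℝ) : ℂ) ^ 2 = _ from (sq _).trans hsq, habs] <;> ring
end

section
/- Let σ² > 0 and let S be a 2×2 Hermitian positive semidefinite complex matrix with eigenvalues η₁ ≥ η₂ ≥ 0 and u a unit eigenvector of S for η₁. For μ₁ ≥ σ² and a unit vector e ∈ ℂ², define g(μ₁, e) = −log(π²·μ₁·σ²) + (σ⁻² − μ₁⁻¹)·(e^H S e) − σ⁻²·Tr(S), where e^H S e is real since S is Hermitian. Then for every μ₁ ≥ σ² and every unit vector e ∈ ℂ², g(μ₁, e) ≤ g(max{η₁, σ²}, u). -/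
open Complex Matrix Real
open scoped ComplexOrder

/-- Scalar monotonicity: φ(μ) = -log μ - η/μ satisfies φ(μ) ≤ φ(M) when
(μ - M)(M - η) ≥ 0. -/
lemma phi_le_aux (η M μ : ℝ) (hM : 0 < M) (hμ : 0 < μ)
    (h : 0 ≤ (μ - M) * (M - η)) :
    -Real.log μ - η / μ ≤ -Real.log M - η / M := by
  have h1 : Real.log (M / μ) ≤ M / μ - 1 :=
    Real.log_le_sub_one_of_pos (by positivity)
  rw [Real.log_div hM.ne' hμ.ne'] at h1
  have key : 1 - M / μ + (η / μ - η / M) = (μ - M) * (M - η) / (μ * M) := by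
    field_simp
    ring
  have h2 : 0 ≤ (μ - M) * (M - η) / (μ * M) := by positivity
  linarith [key ▸ h2]

/-- Let S be 2×2 Hermitian PSD with eigenvalues η₁ ≥ η₂ ≥ 0 and u a
unit eigenvector for η₁.  For μ₁ ≥ σ² and unit e, set
g(μ₁, e) = −log(π²·μ₁·σ²) + (σ⁻² − μ₁⁻¹)·(eᴴSe) − σ⁻²·Tr(S) (where eᴴSe and Tr S are
real since S is Hermitian PSD).  Then g(μ₁, e) ≤ g(max{η₁, σ²}, u) for every μ₁ ≥ σ²
and every unit e. -/
theorem stmt3 (σ2 : ℝ) (hσ : 0 < σ2)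
    (S : Matrix (Fin 2) (Fin 2) ℂ) (hS : S.PosSemidef)
    (η₁ η₂ : ℝ) (hη₁₂ : η₂ ≤ η₁) (hη₂ : 0 ≤ η₂)
    (htr : S.trace = ((η₁ + η₂ : ℝ) : ℂ))
    (hdet : S.det = ((η₁ * η₂ : ℝ) : ℂ))
    (u : Fin 2 → ℂ)
    (hu : ∑ i, (starRingEnd ℂ) (u i) * u i = 1)
    (huev : S.mulVec u = ((η₁ : ℝ) : ℂ) • u)
    (g : ℝ → (Fin 2 → ℂ) → ℝ)
    (hg : ∀ μ₁ e, g μ₁ e = -Real.log (π ^ 2 * μ₁ * σ2)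
        + (σ2⁻¹ - μ₁⁻¹) * (∑ i, ∑ j, (starRingEnd ℂ) (e i) * S i j * e j).re
        - σ2⁻¹ * S.trace.re) :
    ∀ μ₁ ≥ σ2, ∀ e : Fin 2 → ℂ, (∑ i, (starRingEnd ℂ) (e i) * e i = 1) →
      g μ₁ e ≤ g (max η₁ σ2) u := by
  intro μ₁ hμ₁ e he
  have hη₁ : 0 ≤ η₁ := le_trans hη₂ hη₁₂
  -- quadratic form as dot product
  have hq : ∀ v : Fin 2 → ℂ, (∑ i, ∑ j, (starRingEnd ℂ) (v i) * S i j * v j)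
      = star v ⬝ᵥ S.mulVec v := by
    intro v
    simp only [dotProduct, mulVec, Finset.mul_sum, Pi.star_apply, starRingEnd_apply]
    exact Finset.sum_congr rfl fun i _ => Finset.sum_congr rfl fun j _ => by ring
  -- value at u
  have hqu : (∑ i, ∑ j, (starRingEnd ℂ) (u i) * S i j * u j) = (η₁ : ℂ) := by
    rw [hq, huev]
    simp only [dotProduct, Pi.smul_apply, smul_eq_mul]
    rw [show ∑ i, star u i * ((η₁:ℂ) * u i) = (η₁:ℂ) * ∑ i, (starRingEnd ℂ) (u i) * u i by
      rw [Finset.mul_sum]; exact Finset.sum_congr rfl fun i _ => by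
        simp only [starRingEnd_apply, Pi.star_apply]; ring]
    rw [hu, mul_one]
  -- the matrix T = η₁ • 1 - S is PSD
  have hT : (((η₁ : ℂ) • (1 : Matrix (Fin 2) (Fin 2) ℂ) - S)).PosSemidef := by
    have hTh : (((η₁ : ℂ) • (1 : Matrix (Fin 2) (Fin 2) ℂ) - S)).IsHermitian := by
      unfold Matrix.IsHermitian
      rw [conjTranspose_sub, conjTranspose_smul, conjTranspose_one, hS.isHermitian]
      simp [Complex.star_def, Complex.conj_ofReal]
    refine hTh.posSemidef_iff_eigenvalues_nonneg.mpr ?_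
    -- trace and det of T
    set T := ((η₁ : ℂ) • (1 : Matrix (Fin 2) (Fin 2) ℂ) - S) with hTdef
    have htrT : T.trace = ((η₁ - η₂ : ℝ) : ℂ) := by
      rw [hTdef, trace_sub, trace_smul, trace_one, htr]
      push_cast [Fintype.card_fin, smul_eq_mul]
      ring
    have hS00 : S 0 0 + S 1 1 = ((η₁ + η₂ : ℝ) : ℂ) := by
      rw [← htr, Matrix.trace_fin_two]
    have hSdet : S 0 0 * S 1 1 - S 0 1 * S 1 0 = ((η₁ * η₂ : ℝ) : ℂ) := by
      rw [← hdet, Matrix.det_fin_two]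
    have hdetT : T.det = 0 := by
      rw [Matrix.det_fin_two]
      have e00 : T 0 0 = (η₁ : ℂ) - S 0 0 := by simp [hTdef, Matrix.one_apply]
      have e11 : T 1 1 = (η₁ : ℂ) - S 1 1 := by simp [hTdef, Matrix.one_apply]
      have e01 : T 0 1 = - S 0 1 := by simp [hTdef, Matrix.one_apply]
      have e10 : T 1 0 = - S 1 0 := by simp [hTdef, Matrix.one_apply]
      rw [e00, e11, e01, e10]
      have : ((η₁:ℂ) - S 0 0) * ((η₁:ℂ) - S 1 1) - -S 0 1 * -S 1 0
          = (η₁:ℂ)^2 - (η₁:ℂ) * (S 0 0 + S 1 1) + (S 0 0 * S 1 1 - S 0 1 * S 1 0) := by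
        ring
      rw [this, hS00, hSdet]
      push_cast
      ring
    -- eigenvalues of T
    have hsum : T.trace = ∑ i, (hTh.eigenvalues i : ℂ) := by
      conv_lhs => rw [hTh.spectral_theorem, Unitary.conjStarAlgAut_apply]
      rw [Matrix.trace_mul_cycle]
      have h1 : star (hTh.eigenvectorUnitary : Matrix (Fin 2) (Fin 2) ℂ)
          * (hTh.eigenvectorUnitary : Matrix (Fin 2) (Fin 2) ℂ) = 1 :=
        (Matrix.mem_unitaryGroup_iff').mp (hTh.eigenvectorUnitary).2
      rw [h1, Matrix.one_mul, Matrix.trace_diagonal]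
      simp
    have hprod : T.det = ∏ i, (hTh.eigenvalues i : ℂ) := hTh.det_eq_prod_eigenvalues
    set l := hTh.eigenvalues with hl
    have hsum2 : (l 0 + l 1 : ℝ) = η₁ - η₂ := by
      have := hsum.symm.trans htrT
      rw [Fin.sum_univ_two] at this
      exact_mod_cast this
    have hprod2 : (l 0 * l 1 : ℝ) = 0 := by
      have := hprod.symm.trans hdetT
      rw [Fin.prod_univ_two] at this
      exact_mod_cast this
    have hs : 0 ≤ l 0 + l 1 := by rw [hsum2]; linarith
    intro i
    rcases mul_eq_zero.mp hprod2 with h0 | h1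
    · fin_cases i
      · simp [h0]
      · simpa [h0] using hs
    · fin_cases i
      · simpa [h1] using hs
      · simp [h1]
  -- Rayleigh bound
  have hqe : (∑ i, ∑ j, (starRingEnd ℂ) (e i) * S i j * e j).re ≤ η₁ := by
    have h0 := hT.dotProduct_mulVec_nonneg e
    have hexp : star e ⬝ᵥ (((η₁ : ℂ) • (1 : Matrix (Fin 2) (Fin 2) ℂ) - S)).mulVec e
        = (η₁ : ℂ) - star e ⬝ᵥ S.mulVec e := by
      rw [Matrix.sub_mulVec, Matrix.smul_mulVec, Matrix.one_mulVec,
        dotProduct_sub, dotProduct_smul]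
      have : star e ⬝ᵥ e = 1 := by
        simpa only [dotProduct, Pi.star_apply, ← starRingEnd_apply] using he
      rw [this]
      simp
    rw [hexp] at h0
    have := Complex.le_def.mp h0
    have hre : 0 ≤ ((η₁ : ℂ) - star e ⬝ᵥ S.mulVec e).re := this.1
    rw [hq]
    simp only [Complex.sub_re, Complex.ofReal_re] at hre
    linarith
  -- now the scalar argument
  rw [hg, hg, hqu]
  simp only [Complex.ofReal_re]
  set M := max η₁ σ2 with hM
  have hMpos : 0 < M := lt_of_lt_of_le hσ (le_max_right _ _)
  have hμpos : 0 < μ₁ := lt_of_lt_of_le hσ hμ₁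
  have hcoef : 0 ≤ σ2⁻¹ - μ₁⁻¹ := by
    have : μ₁⁻¹ ≤ σ2⁻¹ := by
      apply inv_anti₀ hσ hμ₁
    linarith
  have step1 : (σ2⁻¹ - μ₁⁻¹) * (∑ i, ∑ j, (starRingEnd ℂ) (e i) * S i j * e j).re
      ≤ (σ2⁻¹ - μ₁⁻¹) * η₁ := mul_le_mul_of_nonneg_left hqe hcoef
  have hlog1 : Real.log (π ^ 2 * μ₁ * σ2) = Real.log (π ^ 2 * σ2) + Real.log μ₁ := by
    rw [show π ^ 2 * μ₁ * σ2 = (π ^ 2 * σ2) * μ₁ by ring]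
    exact Real.log_mul (by positivity) hμpos.ne'
  have hlog2 : Real.log (π ^ 2 * M * σ2) = Real.log (π ^ 2 * σ2) + Real.log M := by
    rw [show π ^ 2 * M * σ2 = (π ^ 2 * σ2) * M by ring]
    exact Real.log_mul (by positivity) hMpos.ne'
  have hphi : -Real.log μ₁ - η₁ / μ₁ ≤ -Real.log M - η₁ / M := by
    apply phi_le_aux η₁ M μ₁ hMpos hμpos
    rcases le_or_gt σ2 η₁ with hc | hc
    · have : M = η₁ := max_eq_left hc
      rw [this]; simp
    · have hMe : M = σ2 := max_eq_right hc.le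
      have h1 : 0 ≤ μ₁ - M := by rw [hMe]; linarith
      have h2 : 0 ≤ M - η₁ := by rw [hMe]; linarith
      positivity
  have hd1 : η₁ / μ₁ = μ₁⁻¹ * η₁ := by rw [div_eq_mul_inv]; ring
  have hd2 : η₁ / M = M⁻¹ * η₁ := by rw [div_eq_mul_inv]; ring
  rw [hd1, hd2] at hphi
  rw [hlog1, hlog2]
  nlinarith [step1, hphi]
end

section
/- Let N ≥ 1 be an integer, σ² > 0, and let S be a 2×2 Hermitian positive semidefinite complex matrix with largest eigenvalue η₁ and (E₁, E₂) ∈ ℂ² a unit eigenvector of S for η₁ with E₁ ≠ 0. For F ∈ ℂ and v ≥ 0, let C(F, v) = [[v + σ², v·conj(F)], [v·F, v·|F|² + σ²]] and define the likelihood p(F, v) = det(π·C(F, v))^(−N) · exp(−N·Re(Tr(S·C(F, v)⁻¹))). Then F̂ = E₂/E₁ and v̂ = |E₁|²·max{η₁ − σ², 0} satisfy p(F̂, v̂) ≥ p(F, v) for all F ∈ ℂ and all v ≥ 0. -/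
open Complex Matrix Real
open scoped ComplexOrder

lemma aux_log {σ2 η₁ lam : ℝ} (hσ : 0 < σ2) (hη : 0 ≤ η₁) (hlam : σ2 ≤ lam) :
    Real.log (max η₁ σ2) + η₁ / max η₁ σ2 ≤ Real.log lam + η₁ / lam := by
  set L := max η₁ σ2 with hLdef
  have hL : 0 < L := lt_of_lt_of_le hσ (le_max_right _ _)
  have hlam0 : 0 < lam := lt_of_lt_of_le hσ hlam
  rcases le_or_gt L lam with h | h
  · have h1 : Real.log (L / lam) ≤ L / lam - 1 := Real.log_le_sub_one_of_pos (by positivity)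
    have h2 : Real.log (L / lam) = Real.log L - Real.log lam :=
      Real.log_div (ne_of_gt hL) (ne_of_gt hlam0)
    have hηL : η₁ ≤ L := le_max_left _ _
    have h3 : η₁ * lam - η₁ * L ≤ L * lam - L * L := by nlinarith
    have h4 : η₁ / L - η₁ / lam ≤ 1 - L / lam := by
      have e1 : η₁ / L - η₁ / lam = (η₁ * lam - η₁ * L) / (L * lam) := by field_simp
      have e2 : 1 - L / lam = (L * lam - L * L) / (L * lam) := by field_simp
      rw [e1, e2]
      exact (div_le_div_iff_of_pos_right (by positivity)).mpr h3
    linarith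
  · have hLη : L = η₁ := by
      rcases max_cases η₁ σ2 with ⟨h1, _⟩ | ⟨h1, _⟩
      · exact h1
      · exfalso; rw [hLdef, h1] at h; linarith
    have h1 : Real.log (L / lam) ≤ L / lam - 1 := Real.log_le_sub_one_of_pos (by positivity)
    have h2 : Real.log (L / lam) = Real.log L - Real.log lam :=
      Real.log_div (ne_of_gt hL) (ne_of_gt hlam0)
    have hη0 : 0 < η₁ := hLη ▸ hL
    have h5 : η₁ / L = 1 := by rw [hLη, div_self hη0.ne']
    rw [hLη] at h1 h2 h5 ⊢
    linarith

lemma conj_mul_self (G : ℂ) : (starRingEnd ℂ) G * G = ((‖G‖ : ℝ) : ℂ) ^ 2 := by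
  rw [mul_comm, Complex.mul_conj, ← Complex.sq_norm]
  push_cast
  ring

lemma det_C (σ2 u : ℝ) (G : ℂ) :
    (!![(u : ℂ) + σ2, (u : ℂ) * (starRingEnd ℂ) G;
        (u : ℂ) * G, (u : ℂ) * (‖G‖ : ℂ) ^ 2 + σ2]).det
      = ((σ2 * (σ2 + u * (1 + ‖G‖ ^ 2)) : ℝ) : ℂ) := by
  rw [Matrix.det_fin_two_of]
  push_cast
  linear_combination (-(u : ℂ)^2) * conj_mul_self G

lemma inv_C (σ2 : ℝ) (hσ : 0 < σ2) (u : ℝ) (hu : 0 ≤ u) (G : ℂ) :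
    (!![(u : ℂ) + σ2, (u : ℂ) * (starRingEnd ℂ) G;
        (u : ℂ) * G, (u : ℂ) * (‖G‖ : ℂ) ^ 2 + σ2])⁻¹
      = ((σ2 * (σ2 + u * (1 + ‖G‖ ^ 2)) : ℝ) : ℂ)⁻¹ •
        !![(u : ℂ) * (‖G‖ : ℂ) ^ 2 + σ2, -((u : ℂ) * (starRingEnd ℂ) G);
           -((u : ℂ) * G), (u : ℂ) + σ2] := by
  rw [Matrix.inv_def, Matrix.adjugate_fin_two_of, det_C, Ring.inverse_eq_inv]

lemma trace_C (σ2 : ℝ) (hσ : 0 < σ2) (u : ℝ) (hu : 0 ≤ u) (G : ℂ)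
    (S : Matrix (Fin 2) (Fin 2) ℂ) :
    ((S * (!![(u : ℂ) + σ2, (u : ℂ) * (starRingEnd ℂ) G;
        (u : ℂ) * G, (u : ℂ) * (‖G‖ : ℂ) ^ 2 + σ2])⁻¹).trace).re
    = ((S 0 0).re + (S 1 1).re) / σ2
      - u * ((S 0 0).re + (S 0 1 * G).re + (S 1 0 * (starRingEnd ℂ) G).re
             + ‖G‖ ^ 2 * (S 1 1).re)
          / (σ2 * (σ2 + u * (1 + ‖G‖ ^ 2))) := by
  have hL : 0 < σ2 + u * (1 + ‖G‖ ^ 2) := by positivity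
  rw [inv_C σ2 hσ u hu G, Matrix.mul_smul, Matrix.trace_smul]
  have htr : (S * !![(u : ℂ) * (‖G‖ : ℂ) ^ 2 + σ2, -((u : ℂ) * (starRingEnd ℂ) G);
           -((u : ℂ) * G), (u : ℂ) + σ2]).trace
      = ((u * ‖G‖ ^ 2 + σ2 : ℝ) : ℂ) * S 0 0 + ((-u : ℝ) : ℂ) * (S 0 1 * G)
        + ((-u : ℝ) : ℂ) * (S 1 0 * (starRingEnd ℂ) G) + ((u + σ2 : ℝ) : ℂ) * S 1 1 := by
    rw [Matrix.trace_fin_two]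
    simp [Matrix.mul_apply, Fin.sum_univ_two]
    push_cast
    ring
  rw [htr]
  rw [← Complex.ofReal_inv]
  simp only [smul_eq_mul, Complex.add_re, Complex.re_ofReal_mul]
  field_simp
  ring

lemma key_C (N : ℕ) (σ2 : ℝ) (hσ : 0 < σ2) (u : ℝ) (hu : 0 ≤ u) (G : ℂ)
    (S : Matrix (Fin 2) (Fin 2) ℂ) :
    (((π : ℂ) • !![(u : ℂ) + σ2, (u : ℂ) * (starRingEnd ℂ) G;
        (u : ℂ) * G, (u : ℂ) * (‖G‖ : ℂ) ^ 2 + σ2]).det.re) ^ (-(N : ℤ))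
      * Real.exp (-(N : ℝ) * ((S * (!![(u : ℂ) + σ2, (u : ℂ) * (starRingEnd ℂ) G;
        (u : ℂ) * G, (u : ℂ) * (‖G‖ : ℂ) ^ 2 + σ2])⁻¹).trace).re)
    = ((π ^ 2 * σ2) ^ (-(N : ℤ))
        * Real.exp (-(N : ℝ) * (((S 0 0).re + (S 1 1).re) / σ2)))
      * Real.exp (-(N : ℝ) * (Real.log (σ2 + u * (1 + ‖G‖ ^ 2))
          - u * ((S 0 0).re + (S 0 1 * G).re + (S 1 0 * (starRingEnd ℂ) G).re
             + ‖G‖ ^ 2 * (S 1 1).re)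
          / (σ2 * (σ2 + u * (1 + ‖G‖ ^ 2))))) := by
  have hL : 0 < σ2 + u * (1 + ‖G‖ ^ 2) := by positivity
  set L := σ2 + u * (1 + ‖G‖ ^ 2) with hLdef
  set q : ℝ := (S 0 0).re + (S 0 1 * G).re + (S 1 0 * (starRingEnd ℂ) G).re
      + ‖G‖ ^ 2 * (S 1 1).re with hqdef
  have hdet : (((π : ℂ) • !![(u : ℂ) + σ2, (u : ℂ) * (starRingEnd ℂ) G;
      (u : ℂ) * G, (u : ℂ) * (‖G‖ : ℂ) ^ 2 + σ2]).det.re) = π ^ 2 * σ2 * L := by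
    rw [Matrix.det_smul, det_C]
    rw [show ((π : ℂ) ^ Fintype.card (Fin 2)) = ((π ^ 2 : ℝ) : ℂ) by
      rw [Fintype.card_fin]; push_cast; ring]
    rw [← Complex.ofReal_mul, Complex.ofReal_re]
    ring
  rw [hdet, trace_C σ2 hσ u hu G S]
  have hexp : (π ^ 2 * σ2 * L) ^ (-(N : ℤ))
      = (π ^ 2 * σ2) ^ (-(N : ℤ)) * Real.exp (-(N : ℝ) * Real.log L) := by
    rw [mul_zpow]
    congr 1
    rw [_root_.zpow_neg, zpow_natCast]
    rw [show (-(N : ℝ) * Real.log L) = -((N : ℝ) * Real.log L) by ring, Real.exp_neg]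
    congr 1
    rw [Real.exp_nat_mul, Real.exp_log hL]
  rw [hexp, mul_assoc, mul_assoc, ← Real.exp_add, ← Real.exp_add, ← hLdef]
  congr 2
  ring

lemma shift_psd (S : Matrix (Fin 2) (Fin 2) ℂ) (hS : S.PosSemidef) (η₁ : ℝ)
    (hmax : ∀ t : ℝ, (∃ x : Fin 2 → ℂ, x ≠ 0 ∧ S.mulVec x = ((t : ℝ) : ℂ) • x) → t ≤ η₁) :
    (((η₁ : ℝ) : ℂ) • (1 : Matrix (Fin 2) (Fin 2) ℂ) - S).PosSemidef := by
  have hH : (((η₁ : ℝ) : ℂ) • (1 : Matrix (Fin 2) (Fin 2) ℂ) - S).IsHermitian := by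
    have h1 := hS.isHermitian
    rw [Matrix.IsHermitian] at h1 ⊢
    rw [Matrix.conjTranspose_sub, Matrix.conjTranspose_smul, Matrix.conjTranspose_one, h1,
      Complex.star_def, Complex.conj_ofReal]
  apply hH.posSemidef_iff_eigenvalues_nonneg.mpr
  intro i
  by_contra hneg
  push_neg at hneg
  have hv := hH.mulVec_eigenvectorBasis i
  set w : Fin 2 → ℂ := ⇑(hH.eigenvectorBasis i) with hwdef
  have hw0 : w ≠ 0 := by
    intro h
    exact hH.eigenvectorBasis.orthonormal.ne_zero i (by ext j; exact congrFun h j)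
  have hrs : (hH.eigenvalues i) • w = ((hH.eigenvalues i : ℝ) : ℂ) • w := by
    ext j; simp [Complex.real_smul]
  have hSw : S.mulVec w = (((η₁ - hH.eigenvalues i : ℝ) : ℂ)) • w := by
    have h2 : (((η₁ : ℝ) : ℂ) • (1 : Matrix (Fin 2) (Fin 2) ℂ) - S).mulVec w
        = ((η₁ : ℝ) : ℂ) • w - S.mulVec w := by
      rw [Matrix.sub_mulVec, Matrix.smul_mulVec, Matrix.one_mulVec]
    rw [h2, hrs] at hv
    have := hv
    push_cast
    ext j
    have hj := congrFun this j
    simp only [Pi.sub_apply, Pi.smul_apply, smul_eq_mul] at hj ⊢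
    push_cast at hj ⊢
    linear_combination -hj
  have := hmax (η₁ - hH.eigenvalues i) ⟨w, hw0, hSw⟩
  linarith [show (0 : Fin 2 → ℝ) i = 0 from rfl]

lemma q_bound (S : Matrix (Fin 2) (Fin 2) ℂ) (hS : S.PosSemidef) (η₁ : ℝ)
    (hmax : ∀ t : ℝ, (∃ x : Fin 2 → ℂ, x ≠ 0 ∧ S.mulVec x = ((t : ℝ) : ℂ) • x) → t ≤ η₁)
    (G : ℂ) :
    (S 0 0).re + (S 0 1 * G).re + (S 1 0 * (starRingEnd ℂ) G).re
      + ‖G‖ ^ 2 * (S 1 1).re ≤ η₁ * (1 + ‖G‖ ^ 2) := by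
  have hM := shift_psd S hS η₁ hmax
  have h := hM.re_dotProduct_nonneg ![1, G]
  rw [show (star ![1, G] ⬝ᵥ (((η₁ : ℝ) : ℂ) • (1 : Matrix (Fin 2) (Fin 2) ℂ) - S) *ᵥ ![1, G])
      = ((η₁ * (1 + ‖G‖ ^ 2) : ℝ) : ℂ)
        - (S 0 0 + S 0 1 * G + S 1 0 * (starRingEnd ℂ) G
            + ((‖G‖ ^ 2 : ℝ) : ℂ) * S 1 1) from ?_] at h
  · simp only [RCLike.re_to_complex, Complex.sub_re, Complex.add_re, Complex.ofReal_re,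
      Complex.re_ofReal_mul] at h
    linarith
  · simp [dotProduct, Matrix.mulVec, Fin.sum_univ_two, Matrix.sub_apply,
      Matrix.smul_apply, Matrix.one_apply]
    push_cast
    linear_combination ((η₁ : ℂ) - S 1 1) * conj_mul_self G

lemma eta_nonneg (S : Matrix (Fin 2) (Fin 2) ℂ) (hS : S.PosSemidef) (η₁ : ℝ)
    (E₁ E₂ : ℂ) (hE₁ : E₁ ≠ 0)
    (hunit : ‖E₁‖ ^ 2 + ‖E₂‖ ^ 2 = 1)
    (hev : S.mulVec ![E₁, E₂] = ((η₁ : ℝ) : ℂ) • ![E₁, E₂]) :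
    0 ≤ η₁ := by
  have h := hS.re_dotProduct_nonneg ![E₁, E₂]
  rw [hev] at h
  rw [show (star ![E₁, E₂] ⬝ᵥ ((η₁ : ℝ) : ℂ) • ![E₁, E₂])
      = ((η₁ * (‖E₁‖ ^ 2 + ‖E₂‖ ^ 2) : ℝ) : ℂ) from ?_] at h
  · simp only [RCLike.re_to_complex, Complex.ofReal_re] at h
    rw [hunit] at h
    linarith
  · simp [dotProduct, Fin.sum_univ_two]
    push_cast
    linear_combination (η₁ : ℂ) * conj_mul_self E₁ + (η₁ : ℂ) * conj_mul_self E₂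

lemma q_hat (S : Matrix (Fin 2) (Fin 2) ℂ) (η₁ : ℝ) (E₁ E₂ : ℂ) (hE₁ : E₁ ≠ 0)
    (hev : S.mulVec ![E₁, E₂] = ((η₁ : ℝ) : ℂ) • ![E₁, E₂]) :
    (S 0 0).re + (S 0 1 * (E₂ / E₁)).re + (S 1 0 * (starRingEnd ℂ) (E₂ / E₁)).re
      + ‖(E₂ / E₁)‖ ^ 2 * (S 1 1).re
    = η₁ * (1 + ‖(E₂ / E₁)‖ ^ 2) := by
  set F : ℂ := E₂ / E₁ with hF
  have hw : ![(1 : ℂ), F] = E₁⁻¹ • ![E₁, E₂] := by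
    ext j
    fin_cases j <;> simp [hF, inv_mul_cancel₀ hE₁, div_eq_inv_mul]
  have hwe : S.mulVec ![(1 : ℂ), F] = ((η₁ : ℝ) : ℂ) • ![(1 : ℂ), F] := by
    rw [hw, Matrix.mulVec_smul, hev, smul_comm]
  have h0 := congrFun hwe 0
  have h1 := congrFun hwe 1
  simp only [Matrix.mulVec, dotProduct, Fin.sum_univ_two, Matrix.cons_val_zero,
    Matrix.cons_val_one, Matrix.head_cons, Pi.smul_apply, smul_eq_mul, mul_one] at h0 h1
  have key : S 0 0 + S 0 1 * F + S 1 0 * (starRingEnd ℂ) F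
      + ((‖F‖ ^ 2 : ℝ) : ℂ) * S 1 1
      = ((η₁ * (1 + ‖F‖ ^ 2) : ℝ) : ℂ) := by
    push_cast
    linear_combination h0 + (starRingEnd ℂ) F * h1 + ((η₁ : ℂ) - S 1 1) * conj_mul_self F
  have hre := congrArg Complex.re key
  simp only [Complex.add_re, Complex.re_ofReal_mul, Complex.ofReal_re] at hre
  linarith


/-- Single-packet ML estimators: let S be a 2×2 Hermitian PSD matrix
with largest eigenvalue η₁ and unit eigenvector (E₁, E₂) with E₁ ≠ 0, and for F ∈ ℂ,
v ≥ 0 let C(F,v) = [[v+σ², v·conj F],[v·F, v·|F|²+σ²]] and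
p(F,v) = det(π·C(F,v))^(−N)·exp(−N·Re Tr(S·C(F,v)⁻¹)).  Then F̂ = E₂/E₁ and
v̂ = |E₁|²·max{η₁−σ², 0} maximize p over all F ∈ ℂ and v ≥ 0. -/
theorem stmt5 (N : ℕ) (hN : 1 ≤ N) (σ2 : ℝ) (hσ : 0 < σ2)
    (S : Matrix (Fin 2) (Fin 2) ℂ) (hS : S.PosSemidef)
    (η₁ : ℝ)
    (hmax : ∀ t : ℝ, (∃ x : Fin 2 → ℂ, x ≠ 0 ∧ S.mulVec x = ((t : ℝ) : ℂ) • x) → t ≤ η₁)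
    (E₁ E₂ : ℂ) (hE₁ : E₁ ≠ 0)
    (hunit : ‖E₁‖ ^ 2 + ‖E₂‖ ^ 2 = 1)
    (hev : S.mulVec ![E₁, E₂] = ((η₁ : ℝ) : ℂ) • ![E₁, E₂])
    (C : ℂ → ℝ → Matrix (Fin 2) (Fin 2) ℂ)
    (hC : ∀ F v, C F v = !![(v : ℂ) + σ2, (v : ℂ) * (starRingEnd ℂ) F;
                 (v : ℂ) * F, (v : ℂ) * (‖F‖ : ℂ) ^ 2 + σ2])
    (p : ℂ → ℝ → ℝ)
    (hp : ∀ F v, p F v = (((π : ℂ) • C F v).det.re) ^ (-(N : ℤ))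
        * Real.exp (-(N : ℝ) * ((S * (C F v)⁻¹).trace).re)) :
    ∀ F : ℂ, ∀ v : ℝ, 0 ≤ v →
      p F v ≤ p (E₂ / E₁) (‖E₁‖ ^ 2 * max (η₁ - σ2) 0) := by
  intro F v hv
  -- abbreviations
  set m : ℝ := max (η₁ - σ2) 0 with hm
  set vh : ℝ := ‖E₁‖ ^ 2 * m with hvh
  have hm0 : 0 ≤ m := le_max_right _ _
  have hvh0 : 0 ≤ vh := by positivity
  set Fh : ℂ := E₂ / E₁ with hFh
  have hq := fun G => q_bound S hS η₁ hmax G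
  have hη0 : 0 ≤ η₁ := eta_nonneg S hS η₁ E₁ E₂ hE₁ hunit hev
  -- the general formula
  have hkey : ∀ G : ℂ, ∀ u : ℝ, 0 ≤ u → p G u
      = ((π ^ 2 * σ2) ^ (-(N : ℤ))
          * Real.exp (-(N : ℝ) * (((S 0 0).re + (S 1 1).re) / σ2)))
        * Real.exp (-(N : ℝ) * (Real.log (σ2 + u * (1 + ‖G‖ ^ 2))
            - u * ((S 0 0).re + (S 0 1 * G).re + (S 1 0 * (starRingEnd ℂ) G).re
               + ‖G‖ ^ 2 * (S 1 1).re)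
            / (σ2 * (σ2 + u * (1 + ‖G‖ ^ 2))))) := by
    intro G u hu
    rw [hp, hC]
    exact key_C N σ2 hσ u hu G S
  rw [hkey F v hv, hkey Fh vh hvh0]
  have hA : (0 : ℝ) < (π ^ 2 * σ2) ^ (-(N : ℤ))
      * Real.exp (-(N : ℝ) * (((S 0 0).re + (S 1 1).re) / σ2)) := by
    have hπ : (0 : ℝ) < π := Real.pi_pos
    positivity
  apply mul_le_mul_of_nonneg_left _ (le_of_lt hA)
  rw [Real.exp_le_exp]
  have hNnn : (0 : ℝ) ≤ (N : ℝ) := by positivity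
  apply mul_le_mul_of_nonpos_left _ (by linarith : -(N : ℝ) ≤ 0)
  -- core scalar inequality
  set L : ℝ := σ2 + v * (1 + ‖F‖ ^ 2) with hLdef
  have hL : σ2 ≤ L := by nlinarith [sq_nonneg (‖F‖), mul_nonneg hv (by positivity : (0:ℝ) ≤ 1 + ‖F‖ ^ 2)]
  have hL0 : 0 < L := lt_of_lt_of_le hσ hL
  -- optimum side values
  have hvha : vh * (1 + ‖Fh‖ ^ 2) = m := by
    have hE₁0 : (0 : ℝ) < ‖E₁‖ := by
      simpa using (norm_pos_iff.mpr hE₁)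
    have habsFh : ‖Fh‖ ^ 2 = ‖E₂‖ ^ 2 / ‖E₁‖ ^ 2 := by
      rw [hFh, norm_div, div_pow]
    rw [hvh, habsFh]
    field_simp
    nlinarith [hunit]
  have hLh : σ2 + vh * (1 + ‖Fh‖ ^ 2) = max η₁ σ2 := by
    rw [hvha]
    rcases le_total η₁ σ2 with h | h
    · rw [hm, max_eq_right (by linarith : η₁ - σ2 ≤ 0), max_eq_right h]; ring
    · rw [hm, max_eq_left (by linarith : (0:ℝ) ≤ η₁ - σ2), max_eq_left h]; ring
  have hqh := q_hat S η₁ E₁ E₂ hE₁ hev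
  rw [hLh, hqh, ← hFh]
  have hLs : σ2 ≤ max η₁ σ2 := le_max_right _ _
  have hLs0 : 0 < max η₁ σ2 := lt_of_lt_of_le hσ hLs
  have hηLs : η₁ ≤ max η₁ σ2 := le_max_left _ _
  -- step 2 : value at the optimum
  have e2 : vh * (η₁ * (1 + ‖Fh‖ ^ 2)) / (σ2 * max η₁ σ2)
      = η₁ / σ2 - η₁ / max η₁ σ2 := by
    have : vh * (η₁ * (1 + ‖Fh‖ ^ 2)) = η₁ * m := by
      linear_combination η₁ * hvha
    rw [this]
    have hmval : m = max η₁ σ2 - σ2 := by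
      rw [hm]
      rcases le_total η₁ σ2 with h | h
      · rw [max_eq_right h, max_eq_right (by linarith : η₁ - σ2 ≤ 0)]; ring
      · rw [max_eq_left h, max_eq_left (by linarith : (0:ℝ) ≤ η₁ - σ2)]
    rw [hmval]
    field_simp
  rw [e2]
  -- step 1 : bound on the general side
  have e3 : v * ((S 0 0).re + (S 0 1 * F).re + (S 1 0 * (starRingEnd ℂ) F).re
      + ‖F‖ ^ 2 * (S 1 1).re) / (σ2 * L) ≤ η₁ / σ2 - η₁ / L := by
    have h1 : v * ((S 0 0).re + (S 0 1 * F).re + (S 1 0 * (starRingEnd ℂ) F).re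
        + ‖F‖ ^ 2 * (S 1 1).re) ≤ η₁ * (L - σ2) := by
      have h0 := mul_le_mul_of_nonneg_left (hq F) hv
      nlinarith [h0]
    have h2 : η₁ * (L - σ2) / (σ2 * L) = η₁ / σ2 - η₁ / L := by
      field_simp
    have h3 := (div_le_div_iff_of_pos_right (mul_pos hσ hL0)).mpr h1
    rw [h2] at h3
    exact h3
  -- step 3 : aux_log
  have e4 := aux_log hσ hη0 hL
  linarith
end

section
/- Let L, N ≥ 1 be integers and σ² > 0. Let C_H be an L×L Hermitian positive semidefinite complex matrix with spectral decomposition C_H = V^H·diag(λ₁,…,λ_L)·V, where V is unitary and λ_k ≥ 0. Let Y₁, Y₂ ∈ ℂ^{L×N}. For F ∈ ℂ, v ≥ 0 and 1 ≤ k ≤ L, define C_k(F, v) = [[v·λ_k + σ², v·λ_k·conj(F)], [v·λ_k·F, v·λ_k·|F|² + σ²]] and the 2×2 Hermitian matrix S_k with (i,j) entry (1/N)·(V·Y_i·Y_j^H·V^H)_{kk}, and define the likelihood P(F, v) = Π_{k=1}^{L} det(π·C_k(F, v))^(−N)·exp(−N·Re(Tr(S_k·C_k(F, v)⁻¹))).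 For μ ≥ 0 define the 2×2 Hermitian matrix S(μ) with entries S(μ)ᵢⱼ = (1/N)·Tr(μ·C_H·(μ·C_H + σ²·I_L)⁻¹·Y_i·Y_j^H), let η(μ) be the largest eigenvalue of S(μ), and let G(μ) = η(μ) − σ²·log(det(μ·C_H + σ²·I_L)). Suppose μ̂ ≥ 0 satisfies G(μ̂) ≥ G(μ) for all μ ≥ 0, and let (E₁, E₂) be a unit eigenvector of S(μ̂) for η(μ̂) with E₁ ≠ 0. Then F̂ = E₂/E₁ and v̂ = |E₁|²·μ̂ satisfy P(F̂, v̂) ≥ P(F, v) for all F ∈ ℂ and all v ≥ 0. -/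
open Complex Matrix Real
open scoped ComplexOrder

/-- Rayleigh quotient bound from "largest real eigenvalue" hypothesis, 2x2 Hermitian. -/
lemma stmt11_rayleigh_bound (S : Matrix (Fin 2) (Fin 2) ℂ) (hS : S.IsHermitian) (e : ℝ)
    (h : ∀ t : ℝ, (∃ x : Fin 2 → ℂ, x ≠ 0 ∧ S.mulVec x = ((t : ℝ) : ℂ) • x) → t ≤ e)
    (x : Fin 2 → ℂ) :
    (star x ⬝ᵥ S.mulVec x).re ≤ e * (star x ⬝ᵥ x).re := by
  set M : Matrix (Fin 2) (Fin 2) ℂ := (e : ℂ) • 1 - S with hM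
  have hMh : M.IsHermitian := by
    apply IsHermitian.sub _ hS
    unfold Matrix.IsHermitian
    simp [Matrix.conjTranspose_smul, Complex.star_def, Complex.conj_ofReal]
  have key : ∀ (t : ℝ) (y : Fin 2 → ℂ), y ≠ 0 → M.mulVec y = ((t : ℝ) : ℂ) • y → 0 ≤ t := by
    intro t y hy0 hy
    rw [hM, Matrix.sub_mulVec, Matrix.smul_mulVec, Matrix.one_mulVec] at hy
    have hSy : S.mulVec y = ((e - t : ℝ) : ℂ) • y := by
      have : S.mulVec y = (e : ℂ) • y - ((t : ℝ) : ℂ) • y := by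
        rw [← hy]; abel
      rw [this, ← sub_smul, ← Complex.ofReal_sub]
    have := h (e - t) ⟨y, hy0, hSy⟩
    linarith
  have hpsd : M.PosSemidef := by
    apply hMh.posSemidef_iff_eigenvalues_nonneg.mpr
    intro i
    refine key _ ⇑(hMh.eigenvectorBasis i) (by simpa using hMh.eigenvectorBasis.orthonormal.ne_zero i) ?_
    have hx := hMh.mulVec_eigenvectorBasis i
    rw [hx]; funext j; simp [Complex.real_smul]
  have h0 := hpsd.re_dotProduct_nonneg x
  have hexp : (star x ⬝ᵥ M.mulVec x) = (e : ℂ) * (star x ⬝ᵥ x) - star x ⬝ᵥ S.mulVec x := by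
    rw [hM, Matrix.sub_mulVec, dotProduct_sub, Matrix.smul_mulVec, Matrix.one_mulVec,
      dotProduct_smul, smul_eq_mul]
  rw [hexp] at h0
  have h2 : ((e : ℂ) * (star x ⬝ᵥ x)).re = e * (star x ⬝ᵥ x).re := by
    simp [Complex.mul_re]
  simp only [RCLike.re_to_complex, Complex.sub_re, h2] at h0
  linarith

/-- Factorization of the shifted covariance. -/
lemma stmt11_shift_factor (L : ℕ) (σ2 : ℝ)
    (CH V : Matrix (Fin L) (Fin L) ℂ) (hV' : Vᴴ * V = 1)
    (lam : Fin L → ℝ)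
    (hdecomp : CH = Vᴴ * Matrix.diagonal (fun k => ((lam k : ℝ) : ℂ)) * V)
    (μ : ℝ) :
    (μ : ℂ) • CH + (σ2 : ℂ) • (1 : Matrix (Fin L) (Fin L) ℂ)
      = Vᴴ * Matrix.diagonal (fun k => ((μ * lam k + σ2 : ℝ) : ℂ)) * V := by
  rw [hdecomp]
  have hdiag : Matrix.diagonal (fun k => ((μ * lam k + σ2 : ℝ) : ℂ))
      = (μ : ℂ) • Matrix.diagonal (fun k => ((lam k : ℝ) : ℂ))
        + (σ2 : ℂ) • (1 : Matrix (Fin L) (Fin L) ℂ) := by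
    rw [← Matrix.diagonal_one, ← Matrix.diagonal_smul, ← Matrix.diagonal_smul,
      Matrix.diagonal_add]
    refine congrArg Matrix.diagonal ?_
    funext k
    simp only [Pi.add_apply, Pi.smul_apply, smul_eq_mul, Pi.one_apply]
    push_cast; ring
  rw [hdiag, Matrix.mul_add, Matrix.add_mul]
  congr 1
  · rw [Matrix.mul_smul, Matrix.smul_mul]
  · rw [Matrix.mul_smul, Matrix.smul_mul, Matrix.mul_one, hV']

/-- Trace decomposition of the weighting matrix in eigen-coordinates. -/
lemma stmt11_trace_decomp (L : ℕ) (σ2 : ℝ) (hσ : 0 < σ2)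
    (CH V : Matrix (Fin L) (Fin L) ℂ) (hV : V * Vᴴ = 1) (hV' : Vᴴ * V = 1)
    (lam : Fin L → ℝ) (hlam : ∀ k, 0 ≤ lam k)
    (hdecomp : CH = Vᴴ * Matrix.diagonal (fun k => ((lam k : ℝ) : ℂ)) * V)
    (μ : ℝ) (hμ : 0 ≤ μ) (M : Matrix (Fin L) (Fin L) ℂ) :
    (((μ : ℝ) : ℂ) • CH
        * (((μ : ℝ) : ℂ) • CH + ((σ2 : ℝ) : ℂ) • (1 : Matrix (Fin L) (Fin L) ℂ))⁻¹
        * M).trace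
      = ∑ k, ((μ * lam k / (μ * lam k + σ2) : ℝ) : ℂ) * ((V * M * Vᴴ) k k) := by
  have hpos : ∀ k, 0 < μ * lam k + σ2 := fun k => by nlinarith [hlam k]
  have hne : ∀ k, ((μ * lam k + σ2 : ℝ) : ℂ) ≠ 0 := fun k => by
    exact_mod_cast Complex.ofReal_ne_zero.mpr (hpos k).ne'
  set Dl : Matrix (Fin L) (Fin L) ℂ := Matrix.diagonal (fun k => ((lam k : ℝ) : ℂ)) with hDl
  set D : Matrix (Fin L) (Fin L) ℂ :=
    Matrix.diagonal (fun k => ((μ * lam k + σ2 : ℝ) : ℂ)) with hD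
  set Dinv : Matrix (Fin L) (Fin L) ℂ :=
    Matrix.diagonal (fun k => (((μ * lam k + σ2 : ℝ) : ℂ))⁻¹) with hDinv
  set W : Matrix (Fin L) (Fin L) ℂ :=
    Matrix.diagonal (fun k => ((μ * lam k / (μ * lam k + σ2) : ℝ) : ℂ)) with hW
  have hsum : (μ : ℂ) • CH + (σ2 : ℂ) • (1 : Matrix (Fin L) (Fin L) ℂ) = Vᴴ * D * V :=
    stmt11_shift_factor L σ2 CH V hV' lam hdecomp μ
  have hinv : ((μ : ℂ) • CH + (σ2 : ℂ) • (1 : Matrix (Fin L) (Fin L) ℂ))⁻¹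
      = Vᴴ * Dinv * V := by
    rw [hsum]
    apply Matrix.inv_eq_right_inv
    have h5 : Vᴴ * D * V * (Vᴴ * Dinv * V) = Vᴴ * (D * (V * Vᴴ) * Dinv) * V := by
      simp only [Matrix.mul_assoc]
    rw [h5, hV, Matrix.mul_one, hD, hDinv, Matrix.diagonal_mul_diagonal]
    have h6 : (fun k => ((μ * lam k + σ2 : ℝ) : ℂ) * (((μ * lam k + σ2 : ℝ) : ℂ))⁻¹)
        = fun _ => (1 : ℂ) := by
      funext k; exact mul_inv_cancel₀ (hne k)
    rw [h6, Matrix.diagonal_one, Matrix.mul_one, hV']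
  have hDW : ((μ : ℂ) • Dl) * Dinv = W := by
    rw [hDl, hDinv, hW, ← Matrix.diagonal_smul, Matrix.diagonal_mul_diagonal]
    refine congrArg Matrix.diagonal ?_
    funext k
    simp only [Pi.smul_apply, smul_eq_mul]
    push_cast
    rw [div_eq_mul_inv]
  have hprod : (μ : ℂ) • CH * (Vᴴ * Dinv * V) = Vᴴ * W * V := by
    rw [hdecomp]
    have h1 : (μ : ℂ) • (Vᴴ * Dl * V) * (Vᴴ * Dinv * V)
        = Vᴴ * (((μ : ℂ) • Dl) * (V * Vᴴ) * Dinv) * V := by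
      simp only [Matrix.smul_mul, Matrix.mul_smul, Matrix.mul_assoc]
    rw [h1, hV, Matrix.mul_one, hDW]
  rw [hinv, hprod]
  have h2 : (Vᴴ * W * V * M).trace = (W * (V * M * Vᴴ)).trace := by
    calc (Vᴴ * W * V * M).trace = (Vᴴ * (W * V * M)).trace := by simp [Matrix.mul_assoc]
      _ = ((W * V * M) * Vᴴ).trace := Matrix.trace_mul_comm _ _
      _ = (W * (V * M * Vᴴ)).trace := by simp [Matrix.mul_assoc]
  rw [h2, hW, Matrix.trace]
  simp [Matrix.diag, Matrix.diagonal_mul, Matrix.mul_assoc]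

/-- Determinant of the shifted covariance. -/
lemma stmt11_logdet (L : ℕ) (σ2 : ℝ)
    (CH V : Matrix (Fin L) (Fin L) ℂ) (hV' : Vᴴ * V = 1)
    (lam : Fin L → ℝ)
    (hdecomp : CH = Vᴴ * Matrix.diagonal (fun k => ((lam k : ℝ) : ℂ)) * V)
    (μ : ℝ) :
    ((μ : ℂ) • CH + (σ2 : ℂ) • (1 : Matrix (Fin L) (Fin L) ℂ)).det.re
      = ∏ k, (μ * lam k + σ2) := by
  rw [stmt11_shift_factor L σ2 CH V hV' lam hdecomp μ]
  rw [Matrix.det_mul, Matrix.det_mul]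
  have h7 : Vᴴ.det * V.det = 1 := by rw [← Matrix.det_mul, hV']; exact Matrix.det_one
  have h8 : Vᴴ.det * (Matrix.diagonal (fun k => ((μ * lam k + σ2 : ℝ) : ℂ))).det * V.det
      = (Matrix.diagonal (fun k => ((μ * lam k + σ2 : ℝ) : ℂ))).det := by
    calc Vᴴ.det * (Matrix.diagonal (fun k => ((μ * lam k + σ2 : ℝ) : ℂ))).det * V.det
        = (Vᴴ.det * V.det) * (Matrix.diagonal (fun k => ((μ * lam k + σ2 : ℝ) : ℂ))).det := by
          ring
      _ = _ := by rw [h7, one_mul]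
  rw [h8, Matrix.det_diagonal]
  rw [show (∏ k, ((μ * lam k + σ2 : ℝ) : ℂ)) = ((∏ k, (μ * lam k + σ2) : ℝ) : ℂ) from by
    push_cast; rfl]
  exact Complex.ofReal_re _

/-- Per-eigencoordinate determinant and trace formulas. -/
lemma stmt11_perk (σ2 v lamk : ℝ) (hσ : 0 < σ2) (hv : 0 ≤ v) (hl : 0 ≤ lamk)
    (F : ℂ) (S : Matrix (Fin 2) (Fin 2) ℂ) (a dd : ℝ)
    (h00 : S 0 0 = ((a : ℝ) : ℂ)) (h11 : S 1 1 = ((dd : ℝ) : ℂ))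
    (h10 : S 1 0 = (starRingEnd ℂ) (S 0 1)) :
    (((π : ℂ) • !![(v : ℂ) * (lamk : ℂ) + (σ2 : ℂ), (v : ℂ) * (lamk : ℂ) * (starRingEnd ℂ) F;
         (v : ℂ) * (lamk : ℂ) * F,
         (v : ℂ) * (lamk : ℂ) * ((‖F‖ : ℝ) : ℂ) ^ 2 + (σ2 : ℂ)]).det).re
      = π ^ 2 * (σ2 * (v * (1 + ‖F‖ ^ 2) * lamk + σ2))
    ∧ ((S * (!![(v : ℂ) * (lamk : ℂ) + (σ2 : ℂ), (v : ℂ) * (lamk : ℂ) * (starRingEnd ℂ) F;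
         (v : ℂ) * (lamk : ℂ) * F,
         (v : ℂ) * (lamk : ℂ) * ((‖F‖ : ℝ) : ℂ) ^ 2 + (σ2 : ℂ)])⁻¹).trace).re
      = (a + dd) / σ2
        - v * lamk * (a + 2 * ((S 0 1) * F).re + ‖F‖ ^ 2 * dd)
            / (σ2 * (v * (1 + ‖F‖ ^ 2) * lamk + σ2)) := by
  set C : Matrix (Fin 2) (Fin 2) ℂ :=
    !![(v : ℂ) * (lamk : ℂ) + (σ2 : ℂ), (v : ℂ) * (lamk : ℂ) * (starRingEnd ℂ) F;
       (v : ℂ) * (lamk : ℂ) * F,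
       (v : ℂ) * (lamk : ℂ) * ((‖F‖ : ℝ) : ℂ) ^ 2 + (σ2 : ℂ)] with hC
  set x2 : ℝ := ‖F‖ ^ 2 with hx2
  have hx2nn : 0 ≤ x2 := by positivity
  have hFF : (starRingEnd ℂ) F * F = ((x2 : ℝ) : ℂ) := by
    rw [mul_comm, Complex.mul_conj, hx2, Complex.sq_norm]
  have hdtk : 0 < σ2 * (v * (1 + x2) * lamk + σ2) := by
    have h9 : 0 ≤ v * (1 + x2) * lamk :=
      mul_nonneg (mul_nonneg hv (by linarith)) hl
    nlinarith
  have hdetC : C.det = ((σ2 * (v * (1 + x2) * lamk + σ2) : ℝ) : ℂ) := by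
    rw [hC, Matrix.det_fin_two_of]
    have hxc : ((x2 : ℝ) : ℂ) = ((‖F‖ : ℝ) : ℂ) ^ 2 := by push_cast [hx2]; ring
    push_cast
    rw [← hxc]
    linear_combination (-((v : ℂ) * (lamk : ℂ)) ^ 2) * hFF
  constructor
  · have hds : ((π : ℂ) • C).det = (π : ℂ) ^ 2 * C.det := by
      rw [Matrix.det_smul]
      simp [Fintype.card_fin, smul_eq_mul]
    rw [hds, hdetC]
    have : (π : ℂ) ^ 2 * ((σ2 * (v * (1 + x2) * lamk + σ2) : ℝ) : ℂ)
        = ((π ^ 2 * (σ2 * (v * (1 + x2) * lamk + σ2)) : ℝ) : ℂ) := by push_cast; ring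
    rw [this, Complex.ofReal_re]
  · have hCinv : C⁻¹ = ((σ2 * (v * (1 + x2) * lamk + σ2) : ℝ) : ℂ)⁻¹ •
        !![(v : ℂ) * (lamk : ℂ) * ((‖F‖ : ℝ) : ℂ) ^ 2 + (σ2 : ℂ),
           -((v : ℂ) * (lamk : ℂ) * (starRingEnd ℂ) F);
           -((v : ℂ) * (lamk : ℂ) * F), (v : ℂ) * (lamk : ℂ) + (σ2 : ℂ)] := by
      rw [Matrix.inv_def, hdetC]
      congr 1
      · rw [Ring.inverse_eq_inv']
      · rw [hC, Matrix.adjugate_fin_two_of]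
    rw [hCinv]
    have htr : (S * (((σ2 * (v * (1 + x2) * lamk + σ2) : ℝ) : ℂ)⁻¹ •
        !![(v : ℂ) * (lamk : ℂ) * ((‖F‖ : ℝ) : ℂ) ^ 2 + (σ2 : ℂ),
           -((v : ℂ) * (lamk : ℂ) * (starRingEnd ℂ) F);
           -((v : ℂ) * (lamk : ℂ) * F), (v : ℂ) * (lamk : ℂ) + (σ2 : ℂ)])).trace
        = (((σ2 * (v * (1 + x2) * lamk + σ2) : ℝ)⁻¹ : ℝ) : ℂ) *
          (S 0 0 * ((v : ℂ) * (lamk : ℂ) * ((‖F‖ : ℝ) : ℂ) ^ 2 + (σ2 : ℂ))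
           + S 0 1 * (-((v : ℂ) * (lamk : ℂ) * F))
           + S 1 0 * (-((v : ℂ) * (lamk : ℂ) * (starRingEnd ℂ) F))
           + S 1 1 * ((v : ℂ) * (lamk : ℂ) + (σ2 : ℂ))) := by
      rw [Matrix.mul_smul, Matrix.trace_smul, smul_eq_mul]
      simp only [Matrix.trace_fin_two, Matrix.mul_apply, Fin.sum_univ_two,
        Matrix.of_apply, Matrix.cons_val', Matrix.cons_val_zero, Matrix.cons_val_one,
        Matrix.head_cons, Matrix.empty_val', Matrix.cons_val_fin_one, Matrix.head_fin_const]
      push_cast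
      ring
    rw [htr, Complex.re_ofReal_mul, h10]
    have hre : (S 0 0 * ((v : ℂ) * (lamk : ℂ) * ((‖F‖ : ℝ) : ℂ) ^ 2 + (σ2 : ℂ))
           + S 0 1 * (-((v : ℂ) * (lamk : ℂ) * F))
           + (starRingEnd ℂ) (S 0 1) * (-((v : ℂ) * (lamk : ℂ) * (starRingEnd ℂ) F))
           + S 1 1 * ((v : ℂ) * (lamk : ℂ) + (σ2 : ℂ))).re
        = a * (v * lamk * x2 + σ2) - 2 * v * lamk * ((S 0 1) * F).re
          + dd * (v * lamk + σ2) := by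
      have hcast : (((‖F‖ : ℝ) : ℂ)) ^ 2 = ((x2 : ℝ) : ℂ) := by
        rw [hx2]; push_cast; ring
      rw [h00, h11, hcast]
      simp only [Complex.add_re, Complex.mul_re, Complex.neg_re, Complex.neg_im,
        Complex.ofReal_re, Complex.ofReal_im, Complex.conj_re, Complex.conj_im,
        Complex.add_im, Complex.mul_im]
      ring
    rw [hre]
    have hdne : σ2 * (v * (1 + x2) * lamk + σ2) ≠ 0 := hdtk.ne'
    field_simp
    ring


/-- Multi-packet ML estimators in temporally correlated Rayleigh
fading: with C_H = Vᴴ diag(λ) V Hermitian PSD, sufficient statistics Y₁, Y₂ ∈ ℂ^{L×N},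
per-eigencoordinate covariances C_k(F,v), sample matrices S_k, likelihood
P(F,v) = Π_k det(π C_k(F,v))^(−N) exp(−N Re Tr(S_k C_k(F,v)⁻¹)), and
S(μ)ᵢⱼ = (1/N) Tr(μ C_H (μ C_H + σ² I)⁻¹ Y_i Y_jᴴ) with largest eigenvalue η(μ) and
G(μ) = η(μ) − σ² log det(μ C_H + σ² I): if μ̂ ≥ 0 maximizes G over [0,∞) and
(E₁, E₂) is a unit eigenvector of S(μ̂) for η(μ̂) with E₁ ≠ 0, then F̂ = E₂/E₁ and
v̂ = |E₁|²·μ̂ maximize P over all F ∈ ℂ and v ≥ 0. -/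
theorem stmt11 (L N : ℕ) (hL : 1 ≤ L) (hN : 1 ≤ N) (σ2 : ℝ) (hσ : 0 < σ2)
    (CH : Matrix (Fin L) (Fin L) ℂ) (hCH : CH.PosSemidef)
    (V : Matrix (Fin L) (Fin L) ℂ) (hV : V * Vᴴ = 1) (hV' : Vᴴ * V = 1)
    (lam : Fin L → ℝ) (hlam : ∀ k, 0 ≤ lam k)
    (hdecomp : CH = Vᴴ * Matrix.diagonal (fun k => ((lam k : ℝ) : ℂ)) * V)
    (Y₁ Y₂ : Matrix (Fin L) (Fin N) ℂ)
    (Ck : ℂ → ℝ → Fin L → Matrix (Fin 2) (Fin 2) ℂ)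
    (hCk : ∀ F v k, Ck F v k =
      !![(v : ℂ) * (lam k : ℂ) + (σ2 : ℂ), (v : ℂ) * (lam k : ℂ) * (starRingEnd ℂ) F;
         (v : ℂ) * (lam k : ℂ) * F, (v : ℂ) * (lam k : ℂ) * ((‖F‖ : ℝ) : ℂ) ^ 2 + (σ2 : ℂ)])
    (Sk : Fin L → Matrix (Fin 2) (Fin 2) ℂ)
    (hSk : ∀ k i j, Sk k i j =
      ((N : ℂ))⁻¹ * (V * (![Y₁, Y₂] i * (![Y₁, Y₂] j)ᴴ) * Vᴴ) k k)
    (P : ℂ → ℝ → ℝ)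
    (hP : ∀ F v, P F v = ∏ k,
        ((((π : ℂ) • Ck F v k).det.re) ^ (-(N : ℤ))
          * Real.exp (-(N : ℝ) * ((Sk k * (Ck F v k)⁻¹).trace).re)))
    (Smat : ℝ → Matrix (Fin 2) (Fin 2) ℂ)
    (hSmat : ∀ μ i j, Smat μ i j =
      ((N : ℂ))⁻¹ * (((μ : ℝ) : ℂ) • CH
          * (((μ : ℝ) : ℂ) • CH + ((σ2 : ℝ) : ℂ) • (1 : Matrix (Fin L) (Fin L) ℂ))⁻¹
          * (![Y₁, Y₂] i * (![Y₁, Y₂] j)ᴴ)).trace)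
    (η : ℝ → ℝ)
    (hη : ∀ μ : ℝ, 0 ≤ μ →
      (∃ x : Fin 2 → ℂ, x ≠ 0 ∧ (Smat μ).mulVec x = ((η μ : ℝ) : ℂ) • x) ∧
      (∀ t : ℝ, (∃ x : Fin 2 → ℂ, x ≠ 0 ∧ (Smat μ).mulVec x = ((t : ℝ) : ℂ) • x) → t ≤ η μ))
    (G : ℝ → ℝ)
    (hG : ∀ μ : ℝ, G μ = η μ
        - σ2 * Real.log ((((μ : ℝ) : ℂ) • CH
            + ((σ2 : ℝ) : ℂ) • (1 : Matrix (Fin L) (Fin L) ℂ)).det.re))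
    (μhat : ℝ) (hμhat : 0 ≤ μhat) (hopt : ∀ μ : ℝ, 0 ≤ μ → G μ ≤ G μhat)
    (E₁ E₂ : ℂ) (hE₁ : E₁ ≠ 0)
    (hunit : ‖E₁‖ ^ 2 + ‖E₂‖ ^ 2 = 1)
    (hev : (Smat μhat).mulVec ![E₁, E₂] = ((η μhat : ℝ) : ℂ) • ![E₁, E₂]) :
    ∀ F : ℂ, ∀ v : ℝ, 0 ≤ v →
      P F v ≤ P (E₂ / E₁) (‖E₁‖ ^ 2 * μhat) := by
  classical
  have hNpos : (0 : ℝ) < N := by exact_mod_cast hN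
  -- Hermitian structure of the Sk
  have hSkstar : ∀ k (i j : Fin 2), (starRingEnd ℂ) (Sk k j i) = Sk k i j := by
    intro k i j
    rw [hSk, hSk, _root_.map_mul]
    have h3 : (V * (![Y₁, Y₂] j * (![Y₁, Y₂] i)ᴴ) * Vᴴ)ᴴ
        = V * (![Y₁, Y₂] i * (![Y₁, Y₂] j)ᴴ) * Vᴴ := by
      simp [Matrix.conjTranspose_mul, Matrix.mul_assoc]
    have h4 : (starRingEnd ℂ) ((V * (![Y₁, Y₂] j * (![Y₁, Y₂] i)ᴴ) * Vᴴ) k k)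
        = (V * (![Y₁, Y₂] i * (![Y₁, Y₂] j)ᴴ) * Vᴴ) k k := by
      calc (starRingEnd ℂ) ((V * (![Y₁, Y₂] j * (![Y₁, Y₂] i)ᴴ) * Vᴴ) k k)
          = (V * (![Y₁, Y₂] j * (![Y₁, Y₂] i)ᴴ) * Vᴴ)ᴴ k k := by
            simp [Matrix.conjTranspose_apply]
        _ = (V * (![Y₁, Y₂] i * (![Y₁, Y₂] j)ᴴ) * Vᴴ) k k := by rw [h3]
    rw [h4]
    congr 1
    simp
  set a : Fin L → ℝ := fun k => (Sk k 0 0).re with ha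
  set d : Fin L → ℝ := fun k => (Sk k 1 1).re with hd
  have hSk00 : ∀ k, Sk k 0 0 = ((a k : ℝ) : ℂ) := fun k =>
    (Complex.conj_eq_iff_re.mp (hSkstar k 0 0)).symm
  have hSk11 : ∀ k, Sk k 1 1 = ((d k : ℝ) : ℂ) := fun k =>
    (Complex.conj_eq_iff_re.mp (hSkstar k 1 1)).symm
  have hSk10 : ∀ k, Sk k 1 0 = (starRingEnd ℂ) (Sk k 0 1) := fun k =>
    ((hSkstar k 1 0).symm ▸ rfl : Sk k 1 0 = (starRingEnd ℂ) (Sk k 0 1))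
  set T : ℝ := ∑ k, (a k + d k) with hT
  set u : ℂ → (Fin 2 → ℂ) := fun F => ![1, F] with hu
  have hdotuu : ∀ F : ℂ, (star (u F) ⬝ᵥ (u F)).re = 1 + ‖F‖ ^ 2 := by
    intro F
    have hc : (starRingEnd ℂ) F * F = ((‖F‖ ^ 2 : ℝ) : ℂ) := by
      rw [mul_comm, Complex.mul_conj, Complex.sq_norm]
    simp [hu, dotProduct, Fin.sum_univ_two, Complex.star_def, hc,
      ← Complex.ofReal_pow]
  have h1px2 : ∀ F : ℂ, (0 : ℝ) < 1 + ‖F‖ ^ 2 := by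
    intro F; positivity
  have hQform : ∀ (F : ℂ) (k : Fin L), (star (u F) ⬝ᵥ (Sk k).mulVec (u F)).re
      = a k + 2 * ((Sk k 0 1) * F).re + ‖F‖ ^ 2 * d k := by
    intro F k
    have hs : star (u F) = ![1, (starRingEnd ℂ) F] := by
      funext i; fin_cases i <;> simp [hu, Complex.star_def]
    rw [hs]
    simp only [hu, dotProduct, Matrix.mulVec, Fin.sum_univ_two, Matrix.cons_val_zero,
      Matrix.cons_val_one, Matrix.head_cons, hSk00 k, hSk11 k, hSk10 k]
    simp only [Complex.add_re, Complex.mul_re, Complex.ofReal_re, Complex.ofReal_im,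
      Complex.one_re, Complex.one_im, Complex.conj_re, Complex.conj_im,
      Complex.add_im, Complex.mul_im]
    have habs : ‖F‖ ^ 2 = F.re ^ 2 + F.im ^ 2 := by
      rw [Complex.sq_norm, Complex.normSq_apply]; ring
    rw [habs]; ring
  -- positivity facts
  have hposk : ∀ (μ : ℝ), 0 ≤ μ → ∀ k, 0 < μ * lam k + σ2 := by
    intro μ hμ k; nlinarith [hlam k, mul_nonneg hμ (hlam k)]
  -- Smat decomposition
  have hSmatSum : ∀ μ : ℝ, 0 ≤ μ → ∀ i j, Smat μ i j
      = ∑ k, ((μ * lam k / (μ * lam k + σ2) : ℝ) : ℂ) * Sk k i j := by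
    intro μ hμ i j
    rw [hSmat, stmt11_trace_decomp L σ2 hσ CH V hV hV' lam hlam hdecomp μ hμ _,
      Finset.mul_sum]
    refine Finset.sum_congr rfl fun k _ => ?_
    rw [hSk]
    ring
  have hSmatHerm : ∀ μ : ℝ, 0 ≤ μ → (Smat μ).IsHermitian := by
    intro μ hμ
    unfold Matrix.IsHermitian
    ext i j
    simp only [Matrix.conjTranspose_apply, Complex.star_def]
    rw [hSmatSum μ hμ j i, hSmatSum μ hμ i j, map_sum]
    refine Finset.sum_congr rfl fun k _ => ?_
    rw [_root_.map_mul, Complex.conj_ofReal, hSkstar]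
  have hRsum : ∀ (F : ℂ) (μ : ℝ), 0 ≤ μ →
      (star (u F) ⬝ᵥ (Smat μ).mulVec (u F)).re
        = ∑ k, (μ * lam k / (μ * lam k + σ2))
            * ((star (u F) ⬝ᵥ (Sk k).mulVec (u F)).re) := by
    intro F μ hμ
    have hcx : star (u F) ⬝ᵥ (Smat μ).mulVec (u F)
        = ∑ k, ((μ * lam k / (μ * lam k + σ2) : ℝ) : ℂ)
            * (star (u F) ⬝ᵥ (Sk k).mulVec (u F)) := by
      simp only [dotProduct, Matrix.mulVec, Fin.sum_univ_two, Pi.star_apply]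
      rw [hSmatSum μ hμ 0 0, hSmatSum μ hμ 0 1, hSmatSum μ hμ 1 0, hSmatSum μ hμ 1 1]
      simp only [Finset.mul_sum, Finset.sum_mul, mul_add, add_mul]
      rw [← Finset.sum_add_distrib, ← Finset.sum_add_distrib, ← Finset.sum_add_distrib]
      refine Finset.sum_congr rfl fun k _ => ?_
      ring
    rw [hcx, Complex.re_sum]
    refine Finset.sum_congr rfl fun k _ => ?_
    exact Complex.re_ofReal_mul _ _
  -- G via sums of logs
  have hGl : ∀ μ : ℝ, 0 ≤ μ → G μ = η μ - σ2 * ∑ k, Real.log (μ * lam k + σ2) := by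
    intro μ hμ
    rw [hG, stmt11_logdet L σ2 CH V hV' lam hdecomp μ, Real.log_prod]
    intro k _
    exact (hposk μ hμ k).ne'
  -- master exponential formula for P
  have hPexp : ∀ (F : ℂ) (v : ℝ), 0 ≤ v → P F v = Real.exp (
      ∑ k, ((-(N : ℝ)) * Real.log (π ^ 2 * (σ2 * (v * (1 + ‖F‖ ^ 2) * lam k + σ2)))
        + (-(N : ℝ)) * ((a k + d k) / σ2
            - v * lam k * (a k + 2 * ((Sk k 0 1) * F).re + ‖F‖ ^ 2 * d k)
                / (σ2 * (v * (1 + ‖F‖ ^ 2) * lam k + σ2))))) := by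
    intro F v hv
    rw [hP]
    have hfac : ∀ k : Fin L,
        ((((π : ℂ) • Ck F v k).det.re) ^ (-(N : ℤ))
          * Real.exp (-(N : ℝ) * ((Sk k * (Ck F v k)⁻¹).trace).re))
        = Real.exp ((-(N : ℝ)) * Real.log (π ^ 2 * (σ2 * (v * (1 + ‖F‖ ^ 2) * lam k + σ2)))
        + (-(N : ℝ)) * ((a k + d k) / σ2
            - v * lam k * (a k + 2 * ((Sk k 0 1) * F).re + ‖F‖ ^ 2 * d k)
                / (σ2 * (v * (1 + ‖F‖ ^ 2) * lam k + σ2)))) := by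
      intro k
      have hper := stmt11_perk σ2 v (lam k) hσ hv (hlam k) F (Sk k) (a k) (d k)
        (hSk00 k) (hSk11 k) (hSk10 k)
      rw [hCk, hper.1, hper.2, Real.exp_add]
      congr 1
      have hdk : (0 : ℝ) < π ^ 2 * (σ2 * (v * (1 + ‖F‖ ^ 2) * lam k + σ2)) := by
        have h9 : 0 ≤ v * (1 + ‖F‖ ^ 2) * lam k :=
          mul_nonneg (mul_nonneg hv (h1px2 F).le) (hlam k)
        have : (0 : ℝ) < π := Real.pi_pos
        positivity
      have hc1 : ((-(N : ℤ) : ℤ) : ℝ)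
            * Real.log (π ^ 2 * (σ2 * (v * (1 + ‖F‖ ^ 2) * lam k + σ2)))
          = (-(N : ℝ)) * Real.log (π ^ 2 * (σ2 * (v * (1 + ‖F‖ ^ 2) * lam k + σ2))) := by
        push_cast; ring
      rw [← hc1, ← Real.log_zpow, Real.exp_log (zpow_pos hdk _)]
    calc (∏ k, ((((π : ℂ) • Ck F v k).det.re) ^ (-(N : ℤ))
          * Real.exp (-(N : ℝ) * ((Sk k * (Ck F v k)⁻¹).trace).re)))
        = ∏ k, Real.exp ((-(N : ℝ)) * Real.log (π ^ 2 * (σ2 * (v * (1 + ‖F‖ ^ 2) * lam k + σ2)))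
        + (-(N : ℝ)) * ((a k + d k) / σ2
            - v * lam k * (a k + 2 * ((Sk k 0 1) * F).re + ‖F‖ ^ 2 * d k)
                / (σ2 * (v * (1 + ‖F‖ ^ 2) * lam k + σ2)))) :=
          Finset.prod_congr rfl fun k _ => hfac k
      _ = _ := (Real.exp_sum _ _).symm
  -- closed form of the exponent
  have hSUM : ∀ (F : ℂ) (v : ℝ), 0 ≤ v →
      (∑ k, ((-(N : ℝ)) * Real.log (π ^ 2 * (σ2 * (v * (1 + ‖F‖ ^ 2) * lam k + σ2)))
        + (-(N : ℝ)) * ((a k + d k) / σ2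
            - v * lam k * (a k + 2 * ((Sk k 0 1) * F).re + ‖F‖ ^ 2 * d k)
                / (σ2 * (v * (1 + ‖F‖ ^ 2) * lam k + σ2)))))
      = (-(N : ℝ)) * ((L : ℝ) * Real.log (π ^ 2 * σ2))
        + (-(N : ℝ)) * (∑ k, Real.log (v * (1 + ‖F‖ ^ 2) * lam k + σ2))
        + (-(N : ℝ) / σ2) * T
        + (N / (σ2 * (1 + ‖F‖ ^ 2)))
            * (star (u F) ⬝ᵥ (Smat (v * (1 + ‖F‖ ^ 2))).mulVec (u F)).re := by
    intro F v hv
    have hμnn : 0 ≤ v * (1 + ‖F‖ ^ 2) := mul_nonneg hv (h1px2 F).le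
    have step1 : (∑ k, ((-(N : ℝ))
            * Real.log (π ^ 2 * (σ2 * (v * (1 + ‖F‖ ^ 2) * lam k + σ2)))
        + (-(N : ℝ)) * ((a k + d k) / σ2
            - v * lam k * (a k + 2 * ((Sk k 0 1) * F).re + ‖F‖ ^ 2 * d k)
                / (σ2 * (v * (1 + ‖F‖ ^ 2) * lam k + σ2)))))
        = ∑ k, ((-(N : ℝ)) * Real.log (π ^ 2 * σ2)
            + (-(N : ℝ)) * Real.log (v * (1 + ‖F‖ ^ 2) * lam k + σ2)
            + (-(N : ℝ) / σ2) * (a k + d k)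
            + (N / (σ2 * (1 + ‖F‖ ^ 2)))
                * ((v * (1 + ‖F‖ ^ 2) * lam k
                      / (v * (1 + ‖F‖ ^ 2) * lam k + σ2))
                  * ((star (u F) ⬝ᵥ (Sk k).mulVec (u F)).re))) := by
      refine Finset.sum_congr rfl fun k _ => ?_
      have hpk := hposk _ hμnn k
      have hlog : Real.log (π ^ 2 * (σ2 * (v * (1 + ‖F‖ ^ 2) * lam k + σ2)))
          = Real.log (π ^ 2 * σ2) + Real.log (v * (1 + ‖F‖ ^ 2) * lam k + σ2) := by
        rw [show π ^ 2 * (σ2 * (v * (1 + ‖F‖ ^ 2) * lam k + σ2))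
            = (π ^ 2 * σ2) * (v * (1 + ‖F‖ ^ 2) * lam k + σ2) from by ring]
        rw [Real.log_mul (by positivity) hpk.ne']
      rw [hlog, hQform F k]
      have h2 : (σ2 * (v * (1 + ‖F‖ ^ 2) * lam k + σ2)) ≠ 0 := by positivity
      have h3 : (1 : ℝ) + ‖F‖ ^ 2 ≠ 0 := (h1px2 F).ne'
      field_simp
      ring
    rw [step1]
    rw [Finset.sum_add_distrib, Finset.sum_add_distrib, Finset.sum_add_distrib]
    rw [hRsum F _ hμnn, Finset.sum_const, Finset.card_univ, Fintype.card_fin,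
      nsmul_eq_mul, ← Finset.mul_sum, ← Finset.mul_sum, ← Finset.mul_sum]
    ring
  -- hat quantities
  set Fh : ℂ := E₂ / E₁ with hFh
  set vh : ℝ := ‖E₁‖ ^ 2 * μhat with hvh
  have hE1abs : 0 < ‖E₁‖ := norm_pos_iff.mpr hE₁
  have hvhnn : 0 ≤ vh := mul_nonneg (by positivity) hμhat
  have hx2hat : ‖Fh‖ ^ 2 = ‖E₂‖ ^ 2 / ‖E₁‖ ^ 2 := by
    rw [hFh, norm_div, div_pow]
  have h1phat : 1 + ‖Fh‖ ^ 2 = (‖E₁‖ ^ 2)⁻¹ := by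
    rw [hx2hat]
    field_simp
    linarith [hunit]
  have hμeq : vh * (1 + ‖Fh‖ ^ 2) = μhat := by
    rw [h1phat, hvh]
    field_simp
  have hRhat : (star (u Fh) ⬝ᵥ (Smat μhat).mulVec (u Fh)).re
      = η μhat * (1 + ‖Fh‖ ^ 2) := by
    have huhat : u Fh = E₁⁻¹ • ![E₁, E₂] := by
      funext i
      fin_cases i
      · simp [hu, smul_eq_mul, inv_mul_cancel₀ hE₁]
      · simp [hu, hFh, smul_eq_mul, div_eq_inv_mul]
    have hmv : (Smat μhat).mulVec (u Fh) = ((η μhat : ℝ) : ℂ) • u Fh := by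
      rw [huhat, Matrix.mulVec_smul, hev, smul_comm]
    rw [hmv, dotProduct_smul, smul_eq_mul, Complex.re_ofReal_mul, hdotuu]
  -- final comparison
  intro F v hv
  rw [hPexp F v hv, hPexp Fh vh hvhnn, hSUM F v hv, hSUM Fh vh hvhnn]
  apply Real.exp_le_exp.mpr
  set μ : ℝ := v * (1 + ‖F‖ ^ 2) with hμdef
  have hμnn : 0 ≤ μ := mul_nonneg hv (h1px2 F).le
  -- Rayleigh bound at μ
  have hray : (star (u F) ⬝ᵥ (Smat μ).mulVec (u F)).re ≤ η μ * (1 + ‖F‖ ^ 2) := by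
    have := stmt11_rayleigh_bound (Smat μ) (hSmatHerm μ hμnn) (η μ) ((hη μ hμnn).2) (u F)
    rw [hdotuu] at this
    exact this
  have hcoef : 0 ≤ N / (σ2 * (1 + ‖F‖ ^ 2)) := by positivity
  have hkey1 : (N / (σ2 * (1 + ‖F‖ ^ 2)))
        * (star (u F) ⬝ᵥ (Smat μ).mulVec (u F)).re
      ≤ (N / σ2) * η μ := by
    have h5 := mul_le_mul_of_nonneg_left hray hcoef
    have h6 : (N / (σ2 * (1 + ‖F‖ ^ 2))) * (η μ * (1 + ‖F‖ ^ 2))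
        = (N / σ2) * η μ := by
      field_simp
    linarith [h5, h6.le, h6.ge]
  have hkey2 : (N / (σ2 * (1 + ‖Fh‖ ^ 2)))
        * (star (u Fh) ⬝ᵥ (Smat (vh * (1 + ‖Fh‖ ^ 2))).mulVec (u Fh)).re
      = (N / σ2) * η μhat := by
    rw [hμeq, hRhat]
    field_simp
  have hkey3 : (-(N : ℝ)) * (∑ k, Real.log (μ * lam k + σ2)) + (N / σ2) * η μ
      ≤ (-(N : ℝ)) * (∑ k, Real.log (μhat * lam k + σ2)) + (N / σ2) * η μhat := by
    have hg : G μ ≤ G μhat := hopt μ hμnn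
    rw [hGl μ hμnn, hGl μhat hμhat] at hg
    have h7 := mul_le_mul_of_nonneg_left hg (le_of_lt (div_pos hNpos hσ))
    have e1 : (N / σ2) * (η μ - σ2 * ∑ k, Real.log (μ * lam k + σ2))
        = (N / σ2) * η μ - (N : ℝ) * ∑ k, Real.log (μ * lam k + σ2) := by
      field_simp
    have e2 : (N / σ2) * (η μhat - σ2 * ∑ k, Real.log (μhat * lam k + σ2))
        = (N / σ2) * η μhat - (N : ℝ) * ∑ k, Real.log (μhat * lam k + σ2) := by
      field_simp
    rw [e1, e2] at h7
    linarith
  have hμh2 : (∑ k, Real.log (vh * (1 + ‖Fh‖ ^ 2) * lam k + σ2))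
      = ∑ k, Real.log (μhat * lam k + σ2) := by
    rw [hμeq]
  rw [hμh2]
  linarith [hkey1, hkey2.le, hkey2.ge, hkey3]
end

section
/- Let σ² > 0 and η ≥ 0 be real numbers, and define g(μ) = μ·η/(μ + σ²) − σ²·log(μ + σ²) for μ ≥ 0. Then g attains its maximum over [0, ∞) at μ̂ = max{η − σ², 0}; that is, g(μ) ≤ g(max{η − σ², 0}) for all μ ≥ 0. -/
/-- For σ² > 0, η ≥ 0 and g(μ) = μη/(μ+σ²) − σ²·log(μ+σ²) on [0,∞),
g attains its maximum at μ̂ = max{η − σ², 0}: g(μ) ≤ g(max{η − σ², 0}) for all μ ≥ 0. -/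
theorem stmt12 (σ2 η : ℝ) (hσ : 0 < σ2) (hη : 0 ≤ η)
    (g : ℝ → ℝ)
    (hg : ∀ μ : ℝ, g μ = μ * η / (μ + σ2) - σ2 * Real.log (μ + σ2)) :
    ∀ μ : ℝ, 0 ≤ μ → g μ ≤ g (max (η - σ2) 0) := by
  intro μ hμ
  set μh : ℝ := max (η - σ2) 0 with hμhdef
  have hμh0 : 0 ≤ μh := le_max_right _ _
  have ht : 0 < μ + σ2 := by linarith
  have hth : 0 < μh + σ2 := by linarith
  -- key log inequality : log t - log t̂ ≥ 1 - t̂/t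
  have hlog : 1 - (μh + σ2) / (μ + σ2) ≤ Real.log (μ + σ2) - Real.log (μh + σ2) := by
    have h1 := Real.log_le_sub_one_of_pos (div_pos hth ht)
    rw [Real.log_div (ne_of_gt hth) (ne_of_gt ht)] at h1
    linarith
  rw [hg, hg]
  have e1 : μ * η / (μ + σ2) = η - η * σ2 / (μ + σ2) := by field_simp; ring
  have e2 : μh * η / (μh + σ2) = η - η * σ2 / (μh + σ2) := by field_simp; ring
  rw [e1, e2]
  rcases le_or_gt η σ2 with hc | hc
  · -- μh = 0
    have hμh : μh = 0 := by
      rw [hμhdef]; exact max_eq_right (by linarith)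
    rw [hμh] at hlog ⊢
    simp only [zero_add] at hlog ⊢
    have h3 : 0 ≤ (σ2 - η) * (1 - σ2 / (μ + σ2)) := by
      apply mul_nonneg (by linarith)
      have : σ2 / (μ + σ2) ≤ 1 := by
        rw [div_le_one ht]; linarith
      linarith
    have h4 : η * σ2 / (μ + σ2) = η * (σ2 / (μ + σ2)) := by ring
    have h4b : η * σ2 / σ2 = η := by field_simp
    nlinarith [mul_le_mul_of_nonneg_left hlog (le_of_lt hσ)]
  · -- μh = η - σ2
    have hμh : μh = η - σ2 := by
      rw [hμhdef]; exact max_eq_left (by linarith)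
    rw [hμh] at hlog ⊢
    have hs : η - σ2 + σ2 = η := by ring
    rw [hs] at hlog ⊢
    have hηpos : 0 < η := by linarith
    have h5 : η * σ2 / (μ + σ2) = σ2 * (η / (μ + σ2)) := by ring
    have h6 : η * σ2 / η = σ2 := by field_simp
    nlinarith [mul_le_mul_of_nonneg_left hlog (le_of_lt hσ)]
end
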